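/- Let Γ be a full-rank lattice in ℝ² such that the first coordinate projection p₁ and second coordinate projection p₂ are both injective on Γ. If γ₁, γ₂, γ₃ are three distinct points of Γ whose first coordinates all lie in a common arithmetic progression P = {a + k·d : k ∈ ℤ} (with d ≠ 0), then γ₁, γ₂, γ₃ are collinear, and the line through them is not parallel to the x-axis. -/

import Mathlib

/-- Three distinct points of a full-rank lattice in ℝ² (with both
coordinate projections injective on the lattice) whose first coordinates lie in a common
arithmetic progression are collinear, on a line not parallel to the x-axis
(their second coordinates are pairwise distinct). -/
theorem stmt0 (T : (ℝ × ℝ) ≃ₗ[ℝ] (ℝ × ℝ))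
    (Γ : Set (ℝ × ℝ)) (hΓ : Γ = {p | ∃ m n : ℤ, p = T (m, n)})
    (h1 : Set.InjOn Prod.fst Γ) (h2 : Set.InjOn Prod.snd Γ)
    (a d : ℝ) (hd : d ≠ 0)
    (γ₁ γ₂ γ₃ : ℝ × ℝ) (hγ₁ : γ₁ ∈ Γ) (hγ₂ : γ₂ ∈ Γ) (hγ₃ : γ₃ ∈ Γ)
    (h12 : γ₁ ≠ γ₂) (h13 : γ₁ ≠ γ₃) (h23 : γ₂ ≠ γ₃)
    (hP₁ : ∃ k : ℤ, γ₁.1 = a + k * d)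
    (hP₂ : ∃ k : ℤ, γ₂.1 = a + k * d)
    (hP₃ : ∃ k : ℤ, γ₃.1 = a + k * d) :
    Collinear ℝ ({γ₁, γ₂, γ₃} : Set (ℝ × ℝ)) ∧
      γ₁.2 ≠ γ₂.2 ∧ γ₁.2 ≠ γ₃.2 ∧ γ₂.2 ≠ γ₃.2 := by
  subst hΓ
  set α := (T (1, 0)).1 with hα
  set β := (T (0, 1)).1 with hβ
  have hdecomp : ∀ m n : ℤ, (T ((m : ℝ), (n : ℝ))).1 = m * α + n * β := by
    intro m n
    have h : ((m : ℝ), (n : ℝ)) = (m : ℝ) • ((1 : ℝ), (0 : ℝ)) + (n : ℝ) • ((0 : ℝ), (1 : ℝ)) := by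
      simp [Prod.ext_iff]
    rw [h, map_add, map_smul, map_smul]
    simp [hα, hβ, mul_comm]
  have hzero : (0 : ℝ × ℝ) ∈ {p | ∃ m n : ℤ, p = T (m, n)} :=
    ⟨0, 0, by simp; exact (map_zero T).symm⟩
  have hindep : ∀ A B : ℤ, (A : ℝ) * α + (B : ℝ) * β = 0 → A = 0 ∧ B = 0 := by
    intro A B hAB
    have hmem : T ((A : ℝ), (B : ℝ)) ∈ {p | ∃ m n : ℤ, p = T (m, n)} := ⟨A, B, rfl⟩
    have h0 : (T ((A : ℝ), (B : ℝ))).1 = (0 : ℝ × ℝ).1 := by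
      rw [hdecomp]; simpa using hAB
    have heq := h1 hmem hzero h0
    have h2' : ((A : ℝ), (B : ℝ)) = (0 : ℝ × ℝ) := by
      apply T.injective
      simpa using heq
    have hA : (A : ℝ) = 0 := congrArg Prod.fst h2'
    have hB : (B : ℝ) = 0 := congrArg Prod.snd h2'
    exact ⟨by exact_mod_cast hA, by exact_mod_cast hB⟩
  obtain ⟨m₁, n₁, e₁⟩ := hγ₁
  obtain ⟨m₂, n₂, e₂⟩ := hγ₂
  obtain ⟨m₃, n₃, e₃⟩ := hγ₃
  have hγ₁ : γ₁ ∈ {p | ∃ m n : ℤ, p = T (m, n)} := ⟨m₁, n₁, e₁⟩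
  have hγ₂ : γ₂ ∈ {p | ∃ m n : ℤ, p = T (m, n)} := ⟨m₂, n₂, e₂⟩
  have hγ₃ : γ₃ ∈ {p | ∃ m n : ℤ, p = T (m, n)} := ⟨m₃, n₃, e₃⟩
  obtain ⟨k₁, hk₁⟩ := hP₁
  obtain ⟨k₂, hk₂⟩ := hP₂
  obtain ⟨k₃, hk₃⟩ := hP₃
  have x₁ : γ₁.1 = m₁ * α + n₁ * β := by rw [e₁, hdecomp]
  have x₂ : γ₂.1 = m₂ * α + n₂ * β := by rw [e₂, hdecomp]
  have x₃ : γ₃.1 = m₃ * α + n₃ * β := by rw [e₃, hdecomp]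
  set k : ℤ := k₂ - k₁ with hk
  set l : ℤ := k₃ - k₁ with hl
  have hd₂ : ((m₂ : ℝ) - m₁) * α + ((n₂ : ℝ) - n₁) * β = ((k₂ : ℝ) - k₁) * d := by
    linear_combination hk₂ - x₂ + x₁ - hk₁
  have hd₃ : ((m₃ : ℝ) - m₁) * α + ((n₃ : ℝ) - n₁) * β = ((k₃ : ℝ) - k₁) * d := by
    linear_combination hk₃ - x₃ + x₁ - hk₁
  have hk0 : k ≠ 0 := by
    intro h
    apply h12
    apply h1 hγ₁ hγ₂
    rw [hk₁, hk₂]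
    have : k₂ = k₁ := by omega
    rw [this]
  have hl0 : l ≠ 0 := by
    intro h
    apply h13
    apply h1 hγ₁ hγ₃
    rw [hk₁, hk₃]
    have : k₃ = k₁ := by omega
    rw [this]
  have hkey : (l * (m₂ - m₁) - k * (m₃ - m₁) : ℤ) = 0 ∧
      (l * (n₂ - n₁) - k * (n₃ - n₁) : ℤ) = 0 := by
    apply hindep
    rw [hk, hl]
    push_cast
    linear_combination ((k₃ : ℝ) - k₁) * hd₂ - ((k₂ : ℝ) - k₁) * hd₃
  obtain ⟨hm, hn⟩ := hkey
  have hmR : ((l : ℝ) * ((m₂ : ℝ) - m₁) - k * ((m₃ : ℝ) - m₁)) = 0 := by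
    have : ((l * (m₂ - m₁) - k * (m₃ - m₁) : ℤ) : ℝ) = 0 := by exact_mod_cast hm
    push_cast at this
    linarith
  have hnR : ((l : ℝ) * ((n₂ : ℝ) - n₁) - k * ((n₃ : ℝ) - n₁)) = 0 := by
    have : ((l * (n₂ - n₁) - k * (n₃ - n₁) : ℤ) : ℝ) = 0 := by exact_mod_cast hn
    push_cast at this
    linarith
  have hvec : (l : ℝ) • (γ₂ - γ₁) = (k : ℝ) • (γ₃ - γ₁) := by
    rw [e₁, e₂, e₃, ← map_sub, ← map_sub, ← map_smul, ← map_smul]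
    congr 1
    simp only [Prod.smul_def, Prod.mk_sub_mk, smul_eq_mul, Prod.ext_iff]
    constructor <;> [linarith; linarith]
  have hk0' : (k : ℝ) ≠ 0 := Int.cast_ne_zero.mpr hk0
  have hrel : γ₃ - γ₁ = ((l : ℝ) / k) • (γ₂ - γ₁) := by
    have h' := congrArg (fun v => ((k : ℝ))⁻¹ • v) hvec
    simp only [smul_smul] at h'
    rw [inv_mul_cancel₀ hk0', one_smul] at h'
    rw [div_eq_inv_mul]
    exact h'.symm
  constructor
  · rw [collinear_iff_of_mem (Set.mem_insert γ₁ _)]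
    refine ⟨γ₂ - γ₁, ?_⟩
    intro p hp
    rcases hp with h | h | h
    · exact ⟨0, by simp [h]⟩
    · exact ⟨1, by simp [h]⟩
    · simp only [Set.mem_singleton_iff] at h
      subst h
      exact ⟨(l : ℝ) / k, by
        have := sub_eq_iff_eq_add.mp hrel
        simpa [vadd_eq_add] using this⟩
  · refine ⟨?_, ?_, ?_⟩
    · intro h; exact h12 (h2 hγ₁ hγ₂ h)
    · intro h; exact h13 (h2 hγ₁ hγ₃ h)
    · intro h; exact h23 (h2 hγ₂ hγ₃ h)
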